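/- arXiv:1206.5424 — 2 statements merged into one kernel-verified Lean document; each statement's English description precedes it below -/
import Mathlib

section
/- Let E be a Banach space and (P_σ) a family of operators with the following property for an operator T : E → E: suppose that for every δ > 0 it is NOT the case that for all ξ < ω₁ there exists f with support in (ξ, ω₁), ‖f‖ ≤ 1 and ‖Tf‖ ≥ δ. Then there exists ξ < ω₁ such that T = T P_ξ, where P_ξ is the natural restriction projection. Concretely for J_p(ω₁): if T : J_p(ω₁) → J_p(ω₁) is a bounded operator such that for every n ∈ ℕ there exists ξ_n < ω₁ with ‖Tf‖ < 1/n whenever supp f ⊆ (ξ_n, ω₁) and ‖f‖ ≤ 1, then with ξ = sup_n ξ_n < ω₁ we have T = T P_ξ. -/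
open Ordinal

/-- Abstract form of the localisation lemma for `J_p(ω₁)`: `E` is a Banach space equipped
with a transfinite family of projections `P σ` (modelled on `P_σ f = f·1_{[0,σ]}`, so that
"`supp f ⊆ (σ, ω₁)`" reads "`P σ f = 0`"), compatible in the sense `P σ ∘ P τ = P σ` for
`σ ≤ τ`. If `T` is a bounded operator and for every `n` there is `ξ_n < ω₁` such that
`‖Tf‖ < 1/(n+1)` whenever `P (ξ_n) f = 0` and `‖f‖ ≤ 1`, then `ξ = sup_n ξ_n < ω₁` and
`T = T ∘ P ξ`. -/
theorem stmt15 {E : Type*} [NormedAddCommGroup E] [NormedSpace ℝ E] [CompleteSpace E]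
    (P : Ordinal → E →L[ℝ] E)
    (hP : ∀ σ τ : Ordinal, σ ≤ τ → (P σ).comp (P τ) = P σ)
    (T : E →L[ℝ] E) (ξ : ℕ → Ordinal) (hξ : ∀ n, ξ n < ω₁)
    (h : ∀ n : ℕ, ∀ f : E, P (ξ n) f = 0 → ‖f‖ ≤ 1 → ‖T f‖ < 1 / (n + 1)) :
    iSup ξ < ω₁ ∧ T = T.comp (P (iSup ξ)) := by
  have hsup : iSup ξ < ω₁ := by
    apply Ordinal.iSup_lt_ord_lift _ hξ
    rw [Cardinal.isRegular_aleph_one.cof_omega_eq]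
    simpa using Cardinal.aleph0_lt_aleph_one
  refine ⟨hsup, ?_⟩
  ext f
  simp only [ContinuousLinearMap.comp_apply]
  -- show T g = 0 where g = f - P (iSup ξ) f
  set g : E := f - P (iSup ξ) f with hg
  have hPg : ∀ n, P (ξ n) g = 0 := by
    intro n
    have hle : ξ n ≤ iSup ξ := le_ciSup (Ordinal.bddAbove_range ξ) n
    have := congrArg (fun L => L f) (hP (ξ n) (iSup ξ) hle)
    simp only [ContinuousLinearMap.comp_apply] at this
    simp [hg, map_sub, this]
  have hTg : T g = 0 := by
    by_cases hg0 : g = 0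
    · simp [hg0]
    · by_contra hT0
      have hgpos : (0:ℝ) < ‖g‖ := norm_pos_iff.mpr hg0
      have hTpos : (0:ℝ) < ‖T g‖ := by
        simpa [norm_pos_iff] using hT0
      obtain ⟨n, hn⟩ := exists_nat_gt (‖g‖ / ‖T g‖)
      have key := h n (‖g‖⁻¹ • g) (by rw [map_smul, hPg n, smul_zero])
        (by rw [norm_smul, norm_inv, norm_norm, inv_mul_cancel₀ hgpos.ne'])
      rw [map_smul, norm_smul, norm_inv, norm_norm] at key
      have h1 : ‖g‖ / ‖T g‖ < n + 1 := hn.trans (by linarith)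
      rw [div_lt_iff₀ hTpos] at h1
      rw [inv_mul_lt_iff₀ hgpos, one_div, ← div_eq_mul_inv] at key
      have h2 := (lt_div_iff₀ (by positivity : (0:ℝ) < n+1)).mp key
      linarith
  have : T f - T (P (iSup ξ) f) = 0 := by rw [← map_sub]; exact hTg
  exact sub_eq_zero.mp this
end

section
/- If K is a compact Hausdorff scattered space, then every Radon measure on K is atomic (countably supported); consequently C(K)* is isometrically isomorphic to ℓ₁(K) and has the Schur property (every weakly convergent sequence in C(K)* converges in norm). -/
open MeasureTheory Set

-- outer-regular-like statement for the "diffuse part" B ↦ μ (B \ s)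
lemma aux_outer {K : Type*} [TopologicalSpace K] [MeasurableSpace K] [BorelSpace K]
    (μ : Measure K) [IsFiniteMeasure μ] [μ.Regular] (s : Set K) (hs : MeasurableSet s)
    {B : Set K} {r : ENNReal} (hr : μ (B \ s) < r) :
    ∃ U : Set K, IsOpen U ∧ B ⊆ U ∧ μ (U \ s) < r := by
  have hfin : μ (B ∩ s) ≠ ⊤ := (measure_lt_top μ _).ne
  have hsplit : μ B = μ (B ∩ s) + μ (B \ s) := (measure_inter_add_diff B hs).symm
  have hμB : μ B < μ (B ∩ s) + r := by
    rw [hsplit]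
    exact ENNReal.add_lt_add_left hfin hr
  obtain ⟨U, hBU, hUo, hU⟩ := Set.exists_isOpen_lt_of_lt B _ hμB
  refine ⟨U, hUo, hBU, ?_⟩
  have h1 : μ (U ∩ s) + μ (U \ s) = μ U := measure_inter_add_diff U hs
  have h2 : μ (B ∩ s) ≤ μ (U ∩ s) := measure_mono (inter_subset_inter_left _ hBU)
  have := h1 ▸ hU
  -- μ (U ∩ s) + μ (U \ s) < μ (B ∩ s) + r ≤ μ (U ∩ s) + r
  have h3 : μ (U ∩ s) + μ (U \ s) < μ (U ∩ s) + r :=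
    this.trans_le (add_le_add h2 le_rfl)
  exact lt_of_add_lt_add_left h3

/-- Every finite regular Borel (Radon) measure on a compact scattered Hausdorff space is
purely atomic: there is a countable set `s` such that the measure of every Borel set `A` is
the sum of the masses of the points of `s` lying in `A`. -/
theorem stmt16 {K : Type*} [TopologicalSpace K] [CompactSpace K] [T2Space K]
    [MeasurableSpace K] [BorelSpace K]
    (hscat : ∀ C : Set K, C.Nonempty → IsClosed C →
      ∃ x ∈ C, ∃ U : Set K, IsOpen U ∧ U ∩ C = {x})
    (μ : Measure K) [IsFiniteMeasure μ] [μ.Regular] :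
    ∃ s : Set K, s.Countable ∧
      ∀ A : Set K, MeasurableSet A →
        μ A = ∑' x : s, Set.indicator A (fun y => μ {y}) (x : K) := by
  classical
  set s : Set K := {x | 0 < μ {x}} with hs_def
  have hsc : s.Countable := by
    have := Measure.countable_meas_pos_of_disjoint_iUnion (μ := μ)
      (As := fun x : K => {x}) (fun x => measurableSet_singleton x)
      (fun i j hij => by simp [Function.onFun, Set.disjoint_singleton, hij])
    simpa [hs_def] using this
  have hsm : MeasurableSet s := hsc.measurableSet
  -- Main claim: μ (B \ s) = 0 for all B.
  have hdiff : μ (Set.univ \ s) = 0 := by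
    by_contra hne
    set ε := μ (Set.univ \ s) with hε
    have hεpos : 0 < ε := pos_iff_ne_zero.mpr hne
    set P : Set (Set K) := {C | IsClosed C ∧ ε ≤ μ (C \ s)} with hP
    have huniv : Set.univ ∈ P := ⟨isClosed_univ, le_refl _⟩
    have hZ : ∀ c ⊆ P, IsChain (· ⊆ ·) c → c.Nonempty → ∃ lb ∈ P, ∀ C ∈ c, lb ⊆ C := by
      intro c hcP hchain hcne
      refine ⟨⋂₀ c, ⟨isClosed_sInter fun C hC => (hcP hC).1, ?_⟩, fun C hC => sInter_subset_of_mem hC⟩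
      by_contra hlt
      push_neg at hlt
      have hm : MeasurableSet (⋂₀ c) :=
        (isClosed_sInter fun C hC => (hcP hC).1).measurableSet
      obtain ⟨U, hUo, hsub, hU⟩ := aux_outer μ s hsm hlt
      -- compactness: some element of the chain is inside U
      haveI : Nonempty c := hcne.to_subtype
      have hinter : (Uᶜ ∩ ⋂ C : c, (C : Set K)) = ∅ := by
        rw [← sInter_eq_iInter]
        rw [Set.eq_empty_iff_forall_notMem]
        rintro x ⟨hx1, hx2⟩
        exact hx1 (hsub hx2)
      have hdir : Directed (· ⊇ ·) (fun C : c => (C : Set K)) := by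
        rintro ⟨C1, hC1⟩ ⟨C2, hC2⟩
        rcases hchain.total hC1 hC2 with h | h
        · exact ⟨⟨C1, hC1⟩, subset_rfl, h⟩
        · exact ⟨⟨C2, hC2⟩, h, subset_rfl⟩
      obtain ⟨C₀, hC₀⟩ := (hUo.isClosed_compl.isCompact).elim_directed_family_closed
        (fun C : c => (C : Set K)) (fun C => (hcP C.2).1) hinter hdir
      have hC₀U : (C₀ : Set K) ⊆ U := by
        intro x hx
        by_contra hxU
        exact Set.eq_empty_iff_forall_notMem.mp hC₀ x ⟨hxU, hx⟩
      have : ε ≤ μ (U \ s) :=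
        le_trans (hcP C₀.2).2 (measure_mono (diff_subset_diff_left hC₀U))
      exact absurd (lt_of_le_of_lt this hU) (lt_irrefl _)
    obtain ⟨C, -, hCmin⟩ := zorn_superset_nonempty P hZ Set.univ huniv
    -- C is minimal in P; derive contradiction via scattered
    obtain ⟨hCclosed, hCε⟩ := hCmin.prop
    have hCne : C.Nonempty := by
      rcases Set.eq_empty_or_nonempty C with h | h
      · rw [h] at hCε; simp at hCε; exact absurd hCε (by simp [hεpos.ne'])
      · exact h
    obtain ⟨x, hxC, U, hUo, hUC⟩ := hscat C hCne hCclosed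
    have hC' : (C \ U) ∈ P := by
      refine ⟨hCclosed.sdiff hUo, ?_⟩
      have hsub2 : C \ s ⊆ ((C \ U) \ s) ∪ ({x} \ s) := by
        intro y ⟨hyC, hys⟩
        by_cases hyU : y ∈ U
        · right
          have : y ∈ U ∩ C := ⟨hyU, hyC⟩
          rw [hUC] at this
          exact ⟨this, hys⟩
        · exact Or.inl ⟨⟨hyC, hyU⟩, hys⟩
      have hx0 : μ ({x} \ s) = 0 := by
        by_cases hxs : x ∈ s
        · simp [Set.diff_eq_empty.mpr (Set.singleton_subset_iff.mpr hxs)]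
        · have : μ {x} = 0 := by
            by_contra h
            exact hxs (pos_iff_ne_zero.mpr h)
          exact le_antisymm (le_trans (measure_mono diff_subset) this.le) (zero_le)
      calc ε ≤ μ (C \ s) := hCε
        _ ≤ μ (((C \ U) \ s) ∪ ({x} \ s)) := measure_mono hsub2
        _ ≤ μ ((C \ U) \ s) + μ ({x} \ s) := measure_union_le _ _
        _ = μ ((C \ U) \ s) := by rw [hx0, add_zero]
    have := hCmin.le_of_le hC' diff_subset
    have hxC' : x ∈ C \ U := this hxC
    have hxU : x ∈ U := by
      have : x ∈ U ∩ C := by rw [hUC]; exact rfl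
      exact this.1
    exact hxC'.2 hxU
  -- Conclude
  refine ⟨s, hsc, fun A hA => ?_⟩
  have h1 : μ (A \ s) = 0 := measure_mono_null (diff_subset_diff_left (subset_univ A)) hdiff
  have h2 : μ A = μ (A ∩ s) := by
    rw [← measure_inter_add_diff A hsm, h1, add_zero]
  have h3 : μ (A ∩ s) = ∑' x : ↥(A ∩ s), μ ({(x : K)} : Set K) := by
    conv_lhs => rw [← Set.biUnion_of_singleton (A ∩ s)]
    exact measure_biUnion (hsc.mono inter_subset_right)
      (fun i _ j _ hij => by simp [Set.disjoint_singleton, hij])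
      (fun b _ => measurableSet_singleton b)
  have h4 : (∑' x : ↥(A ∩ s), μ ({(x : K)} : Set K))
      = ∑' x : K, (A ∩ s).indicator (fun y => μ {y}) x := tsum_subtype (A ∩ s) (fun y => μ {y})
  have h5 : (∑' x : s, Set.indicator A (fun y => μ {y}) (x : K))
      = ∑' x : K, s.indicator (Set.indicator A (fun y => μ {y})) x := tsum_subtype s (Set.indicator A (fun y => μ {y}))
  rw [h2, h3, h4, h5]
  apply tsum_congr
  intro y
  simp only [Set.indicator, Set.mem_inter_iff]
  by_cases hyA : y ∈ A <;> by_cases hys : y ∈ s <;> simp [hyA, hys]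
end
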